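/- A topological group that is the union of countably many G_δ-complete subgroups is itself G_δ-complete. -/

import Mathlib

/-- The topology generated by the `G_δ`-subsets of `(G, t)`. -/
def gdeltaTopology {G : Type*} (t : TopologicalSpace G) : TopologicalSpace G :=
  TopologicalSpace.generateFrom
    {s : Set G | ∃ f : ℕ → Set G, (∀ n, @IsOpen G t (f n)) ∧ s = ⋂ n, f n}

/-- A topological group is Raïkov-complete if every filter which is Cauchy with
respect to the two-sided (upper) uniformity — i.e. admits arbitrarily small sets
for both the left and the right uniformity — converges. -/
def RaikovComplete (G : Type*) [Group G] [TopologicalSpace G] : Prop :=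
  ∀ F : Filter G, F.NeBot →
    (∀ U ∈ nhds (1 : G), ∃ S ∈ F, ∀ x ∈ S, ∀ y ∈ S, x * y⁻¹ ∈ U ∧ x⁻¹ * y ∈ U) →
    ∃ x : G, F ≤ nhds x

/-- A topological group `(G, t)` is `G_δ`-complete if `G` equipped with the topology
generated by `G_δ`-sets is Raïkov-complete. -/
def GDeltaComplete (G : Type*) [Group G] [t : TopologicalSpace G] : Prop :=
  @RaikovComplete G _ (gdeltaTopology t)

open Set Filter TopologicalSpace Pointwise

section aux
variable {X Y : Type*}

def Gd (t : TopologicalSpace X) (s : Set X) : Prop :=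
  ∃ f : ℕ → Set X, (∀ n, @IsOpen X t (f n)) ∧ s = ⋂ n, f n

theorem Gd.univ (t : TopologicalSpace X) : Gd t (Set.univ : Set X) :=
  ⟨fun _ => Set.univ, fun _ => @isOpen_univ X t, by simp⟩

theorem Gd.inter {t : TopologicalSpace X} {s u : Set X} (hs : Gd t s) (hu : Gd t u) :
    Gd t (s ∩ u) := by
  obtain ⟨f, hf, rfl⟩ := hs
  obtain ⟨g, hg, rfl⟩ := hu
  refine ⟨fun n => f n ∩ g n, fun n => letI := t; (hf n).inter (hg n), ?_⟩
  ext x; simp [forall_and]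

theorem Gd.iInter {t : TopologicalSpace X} {f : ℕ → Set X} (h : ∀ n, Gd t (f n)) :
    Gd t (⋂ n, f n) := by
  choose g hg hfg using h
  set e : ℕ ≃ ℕ × ℕ := (Denumerable.eqv (ℕ × ℕ)).symm with he
  refine ⟨fun k => g (e k).1 (e k).2, fun k => hg _ _, ?_⟩
  ext x
  simp only [Set.mem_iInter, hfg]
  constructor
  · intro hx k; exact hx _ _
  · intro hx m k
    have := hx (e.symm (m, k))
    rwa [Equiv.apply_symm_apply] at this

theorem Gd.preimage {tX : TopologicalSpace X} {tY : TopologicalSpace Y} {φ : X → Y}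
    (hφ : @Continuous X Y tX tY φ) {s : Set Y} (hs : Gd tY s) : Gd tX (φ ⁻¹' s) := by
  obtain ⟨f, hf, rfl⟩ := hs
  exact ⟨fun n => φ ⁻¹' f n, fun n => @IsOpen.preimage X Y tX tY φ hφ _ (hf n),
    by rw [Set.preimage_iInter]⟩

theorem mem_nhds_gdelta {t : TopologicalSpace X} {a : X} {W : Set X} :
    W ∈ @nhds X (gdeltaTopology t) a ↔ ∃ s, Gd t s ∧ a ∈ s ∧ s ⊆ W := by
  have h : gdeltaTopology t = generateFrom {s : Set X | Gd t s} := rfl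
  rw [h, nhds_generateFrom, Filter.mem_biInf_of_directed]
  · simp only [Filter.mem_principal, Set.mem_setOf_eq]
    constructor
    · rintro ⟨s, ⟨has, hGd⟩, hsW⟩; exact ⟨s, hGd, has, hsW⟩
    · rintro ⟨s, hGd, has, hsW⟩; exact ⟨s, ⟨has, hGd⟩, hsW⟩
  · rintro s ⟨has, hs⟩ u ⟨hau, hu⟩
    exact ⟨s ∩ u, ⟨⟨has, hau⟩, hs.inter hu⟩,
      principal_mono.mpr inter_subset_left, principal_mono.mpr inter_subset_right⟩
  · exact ⟨Set.univ, mem_univ a, Gd.univ t⟩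

theorem gd_subtype_to [t : TopologicalSpace X] {p : X → Prop} {s : Set (Subtype p)}
    (hs : Gd inferInstance s) : ∃ U : Set X, Gd t U ∧ s = Subtype.val ⁻¹' U := by
  obtain ⟨f, hf, rfl⟩ := hs
  have h : ∀ n, ∃ O : Set X, IsOpen O ∧ f n = Subtype.val ⁻¹' O := by
    intro n
    rcases isOpen_induced_iff.mp (hf n) with ⟨O, hO, hOe⟩
    exact ⟨O, hO, hOe.symm⟩
  choose O hO hOe using h
  exact ⟨⋂ n, O n, ⟨O, hO, rfl⟩, by rw [preimage_iInter]; exact iInter_congr hOe⟩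

theorem Gd.halve {G : Type*} [Group G] [t : TopologicalSpace G] [IsTopologicalGroup G]
    {W : Set G} (hW : Gd t W) (h1 : (1 : G) ∈ W) :
    ∃ V : Set G, Gd t V ∧ (1 : G) ∈ V ∧ (∀ x ∈ V, x⁻¹ ∈ V) ∧
      ∀ x ∈ V, ∀ y ∈ V, x * y ∈ W := by
  obtain ⟨f, hf, rfl⟩ := hW
  have h1' : ∀ n, (1 : G) ∈ f n := by simpa using h1
  have hex : ∀ n, ∃ V : Set G, IsOpen V ∧ (1 : G) ∈ V ∧ V * V ⊆ f n := fun n =>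
    exists_open_nhds_one_mul_subset ((hf n).mem_nhds (h1' n))
  choose V hVo hV1 hVm using hex
  refine ⟨(⋂ n, V n) ∩ (fun x : G => x⁻¹) ⁻¹' (⋂ n, V n),
    Gd.inter ⟨V, hVo, rfl⟩ (Gd.preimage continuous_inv ⟨V, hVo, rfl⟩), ?_, ?_, ?_⟩
  · simp [hV1]
  · rintro x ⟨hx1, hx2⟩
    refine ⟨hx2, ?_⟩
    simpa using hx1
  · rintro x ⟨hx, -⟩ y ⟨hy, -⟩
    simp only [Set.mem_iInter] at hx hy ⊢
    exact fun n => hVm n (Set.mul_mem_mul (hx n) (hy n))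
end aux

/-- A topological group which is the union of countably many
`G_δ`-complete subgroups is itself `G_δ`-complete. -/
theorem stmt12 {G : Type*} [Group G] [TopologicalSpace G] [IsTopologicalGroup G]
    (H : ℕ → Subgroup G) (hc : ∀ n, GDeltaComplete (H n))
    (hcov : ∀ x : G, ∃ n, x ∈ H n) :
    GDeltaComplete G := by
  classical
  intro F hne hF
  haveI := hne
  -- Cauchy condition phrased via Gd sets
  have hFc : ∀ U : Set G, Gd inferInstance U → (1 : G) ∈ U →
      ∃ S ∈ F, ∀ x ∈ S, ∀ y ∈ S, x * y⁻¹ ∈ U ∧ x⁻¹ * y ∈ U := fun U hU h1 =>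
    hF U (mem_nhds_gdelta.mpr ⟨U, hU, h1, subset_rfl⟩)
  -- Step A : some subgroup "clings" to F
  have stepA : ∃ n, ∀ S ∈ F, ∀ U : Set G, Gd inferInstance U → (1 : G) ∈ U →
      ∃ a : G, a ∈ H n ∧ (∃ s ∈ S, s⁻¹ * a ∈ U) ∧ (∃ s ∈ S, a * s⁻¹ ∈ U) := by
    by_contra hcon
    push_neg at hcon
    choose S hSF U hU hU1 hbad using hcon
    have hUi : Gd inferInstance (⋂ m, U m) := Gd.iInter hU
    obtain ⟨S₀, hS₀, hS₀c⟩ := hFc (⋂ m, U m) hUi (by simp [hU1])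
    obtain ⟨s₀, hs₀⟩ := Filter.nonempty_of_mem hS₀
    obtain ⟨n, hn⟩ := hcov s₀
    obtain ⟨t₀, ht₀, ht₀'⟩ := Filter.nonempty_of_mem (inter_mem hS₀ (hSF n))
    have h1 : t₀⁻¹ * s₀ ∈ U n := Set.mem_iInter.mp (hS₀c t₀ ht₀ s₀ hs₀).2 n
    have h2 : s₀ * t₀⁻¹ ∈ U n := Set.mem_iInter.mp (hS₀c s₀ hs₀ t₀ ht₀).1 n
    exact hbad n s₀ hn ⟨t₀, ht₀', h1⟩ t₀ ht₀' h2
  obtain ⟨n, hcling⟩ := stepA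
  -- the base sets in the subgroup
  set B : Set G → Set G → Set ↥(H n) := fun S U =>
    {a | (∃ s ∈ S, s⁻¹ * (a : G) ∈ U) ∧ (∃ s ∈ S, (a : G) * s⁻¹ ∈ U)} with hB
  have hBmono : ∀ {S S' U U' : Set G}, S ⊆ S' → U ⊆ U' → B S U ⊆ B S' U' := by
    rintro S S' U U' hS hU a ⟨⟨s, hs, h1⟩, ⟨s', hs', h2⟩⟩
    exact ⟨⟨s, hS hs, hU h1⟩, ⟨s', hS hs', hU h2⟩⟩
  set ι := {q : Set G × Set G // q.1 ∈ F ∧ Gd inferInstance q.2 ∧ (1 : G) ∈ q.2} with hι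
  haveI : Nonempty ι := ⟨⟨(Set.univ, Set.univ), univ_mem, Gd.univ _, mem_univ _⟩⟩
  have hdir : Directed (· ≥ ·) (fun q : ι => 𝓟 (B q.1.1 q.1.2)) := by
    intro i j
    refine ⟨⟨(i.1.1 ∩ j.1.1, i.1.2 ∩ j.1.2), inter_mem i.2.1 j.2.1,
      i.2.2.1.inter j.2.2.1, ⟨i.2.2.2, j.2.2.2⟩⟩, ?_, ?_⟩
    · exact principal_mono.mpr (hBmono inter_subset_left inter_subset_left)
    · exact principal_mono.mpr (hBmono inter_subset_right inter_subset_right)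
  set F' : Filter ↥(H n) := ⨅ q : ι, 𝓟 (B q.1.1 q.1.2) with hF'def
  have hmem' : ∀ {W : Set ↥(H n)}, W ∈ F' ↔ ∃ q : ι, B q.1.1 q.1.2 ⊆ W := by
    intro W
    rw [hF'def, Filter.mem_iInf_of_directed hdir]
    simp [Filter.mem_principal]
  have hBne : ∀ q : ι, (B q.1.1 q.1.2).Nonempty := by
    intro q
    obtain ⟨a, haH, h1, h2⟩ := hcling q.1.1 q.2.1 q.1.2 q.2.2.1 q.2.2.2
    exact ⟨⟨a, haH⟩, h1, h2⟩
  haveI hFne' : F'.NeBot := by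
    rw [hF'def]
    exact Filter.iInf_neBot_of_directed hdir fun q =>
      Filter.principal_neBot_iff.mpr (hBne q)
  -- Step C : F' is Cauchy in the Gδ-topology of the subgroup
  have hcauchy' : ∀ W ∈ @nhds ↥(H n) (gdeltaTopology inferInstance) 1,
      ∃ T ∈ F', ∀ x ∈ T, ∀ y ∈ T, x * y⁻¹ ∈ W ∧ x⁻¹ * y ∈ W := by
    intro W hW
    obtain ⟨s', hs', h1s', hs'W⟩ := mem_nhds_gdelta.mp hW
    obtain ⟨U, hU, rfl⟩ := gd_subtype_to hs'
    have h1U : (1 : G) ∈ U := by simpa using h1s'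
    obtain ⟨V₁, hV₁, hV₁1, hV₁sym, hV₁mul⟩ := Gd.halve hU h1U
    obtain ⟨V₂, hV₂, hV₂1, hV₂sym, hV₂mul⟩ := Gd.halve hV₁ hV₁1
    set V := V₁ ∩ V₂ with hVdef
    have hVGd : Gd inferInstance V := hV₁.inter hV₂
    have hV1 : (1 : G) ∈ V := ⟨hV₁1, hV₂1⟩
    have hVsym : ∀ x ∈ V, x⁻¹ ∈ V := fun x hx => ⟨hV₁sym x hx.1, hV₂sym x hx.2⟩
    have hVVV : ∀ x ∈ V, ∀ y ∈ V, ∀ z ∈ V, x * (y * z) ∈ U := fun x hx y hy z hz =>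
      hV₁mul x hx.1 _ (hV₂mul y hy.2 z hz.2)
    obtain ⟨S, hS, hSc⟩ := hFc V hVGd hV1
    refine ⟨B S V, hmem'.mpr ⟨⟨(S, V), hS, hVGd, hV1⟩, subset_rfl⟩, ?_⟩
    rintro a ⟨⟨s, hsS, hsa⟩, ⟨s', hs'S, hs'a⟩⟩ b ⟨⟨u, huS, hub⟩, ⟨u', hu'S, hu'b⟩⟩
    constructor
    · refine hs'W ?_
      show ((a * b⁻¹ : ↥(H n)) : G) ∈ U
      have h1 : (a : G) * s'⁻¹ ∈ V := hs'a
      have h2 : s' * u'⁻¹ ∈ V := (hSc s' hs'S u' hu'S).1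
      have h3 : u' * (b : G)⁻¹ ∈ V := by
        have := hVsym _ hu'b
        simpa [mul_inv_rev] using this
      have heq : ((a : G) * s'⁻¹) * ((s' * u'⁻¹) * (u' * (b : G)⁻¹)) = (a : G) * (b : G)⁻¹ := by
        group
      have := hVVV _ h1 _ h2 _ h3
      rw [heq] at this
      simpa using this
    · refine hs'W ?_
      show ((a⁻¹ * b : ↥(H n)) : G) ∈ U
      have h1 : (a : G)⁻¹ * s ∈ V := by
        have := hVsym _ hsa
        simpa [mul_inv_rev] using this
      have h2 : s⁻¹ * u ∈ V := (hSc s hsS u huS).2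
      have h3 : u⁻¹ * (b : G) ∈ V := hub
      have heq : ((a : G)⁻¹ * s) * ((s⁻¹ * u) * (u⁻¹ * (b : G))) = (a : G)⁻¹ * (b : G) := by
        group
      have := hVVV _ h1 _ h2 _ h3
      rw [heq] at this
      simpa using this
  obtain ⟨h', hh'⟩ := hc n F' hFne' hcauchy'
  set h : G := (h' : G) with hh
  -- Step D : h is a cluster point of F
  have hcluster : ∀ W : Set G, Gd inferInstance W → h ∈ W → ∀ S ∈ F, ∃ x ∈ S, x ∈ W := by
    intro W hW hhW S hS
    have hW₀ : Gd inferInstance ((fun x : G => h * x) ⁻¹' W) :=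
      hW.preimage (continuous_mul_left h)
    have h1W₀ : (1 : G) ∈ (fun x : G => h * x) ⁻¹' W := by simpa using hhW
    obtain ⟨V, hV, hV1, hVsym, hVmul⟩ := Gd.halve hW₀ h1W₀
    set N : Set G := (fun x : G => h⁻¹ * x) ⁻¹' V with hNdef
    have hN : Gd inferInstance N := hV.preimage (continuous_mul_left h⁻¹)
    have hmemN : (Subtype.val ⁻¹' N : Set ↥(H n)) ∈ F' := by
      refine hh' (mem_nhds_gdelta.mpr ⟨Subtype.val ⁻¹' N, ?_, ?_, subset_rfl⟩)
      · exact hN.preimage continuous_subtype_val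
      · show h⁻¹ * (h' : G) ∈ V
        rw [← hh]
        simpa using hV1
    obtain ⟨q, hq⟩ := hmem'.mp hmemN
    obtain ⟨a, haH, ⟨s, hsS, hsa⟩, hright⟩ := hcling (q.1.1 ∩ S) (inter_mem q.2.1 hS)
      (q.1.2 ∩ V) (q.2.2.1.inter hV) ⟨q.2.2.2, hV1⟩
    have haB0 : (⟨a, haH⟩ : ↥(H n)) ∈ B (q.1.1 ∩ S) (q.1.2 ∩ V) := ⟨⟨s, hsS, hsa⟩, hright⟩
    have haB : (⟨a, haH⟩ : ↥(H n)) ∈ B q.1.1 q.1.2 :=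
      hBmono inter_subset_left inter_subset_left haB0
    have haN : h⁻¹ * a ∈ V := hq haB
    have hsa' : s⁻¹ * a ∈ V := hsa.2
    refine ⟨s, hsS.2, ?_⟩
    have : h⁻¹ * s = (h⁻¹ * a) * (s⁻¹ * a)⁻¹ := by group
    have hmem : h⁻¹ * s ∈ (fun x : G => h * x) ⁻¹' W := by
      rw [this]
      exact hVmul _ haN _ (hVsym _ hsa')
    simpa using hmem
  -- Step E : F converges to h
  refine ⟨h, ?_⟩
  rw [Filter.le_def]
  intro s hs
  obtain ⟨W, hW, hhW, hWs⟩ := mem_nhds_gdelta.mp hs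
  refine mem_of_superset ?_ hWs
  have hW₀ : Gd inferInstance ((fun x : G => h * x) ⁻¹' W) :=
    hW.preimage (continuous_mul_left h)
  have h1W₀ : (1 : G) ∈ (fun x : G => h * x) ⁻¹' W := by simpa using hhW
  obtain ⟨V, hV, hV1, hVsym, hVmul⟩ := Gd.halve hW₀ h1W₀
  obtain ⟨S, hS, hSc⟩ := hFc V hV hV1
  set N : Set G := (fun x : G => h⁻¹ * x) ⁻¹' V with hNdef
  have hN : Gd inferInstance N := hV.preimage (continuous_mul_left h⁻¹)
  have hhN : h ∈ N := by
    show h⁻¹ * h ∈ V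
    simpa using hV1
  obtain ⟨s₀, hs₀S, hs₀N⟩ := hcluster N hN hhN S hS
  refine mem_of_superset hS ?_
  intro x hx
  have h1 : h⁻¹ * s₀ ∈ V := hs₀N
  have h2 : s₀⁻¹ * x ∈ V := (hSc s₀ hs₀S x hx).2
  have : h⁻¹ * x = (h⁻¹ * s₀) * (s₀⁻¹ * x) := by group
  have hmem : h⁻¹ * x ∈ (fun y : G => h * y) ⁻¹' W := by
    rw [this]
    exact hVmul _ h1 _ h2
  simpa using hmem
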